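/- Let E be a subspace of a Banach space B of finite dimension k. Then there is an inner product (·,·) on E, with associated norm ‖·‖, such that for all v ∈ E one has ‖v‖ ≤ |v| ≤ √k ‖v‖. -/

import Mathlib

open MeasureTheory Filter Metric Module Submodule Set

noncomputable section

namespace BY

variable {B B' : Type*}

/-- The unit sphere of a subspace `E`. -/
def subSphere [NormedAddCommGroup B] [NormedSpace ℝ B] (E : Submodule ℝ B) : Set B :=
  {v : B | v ∈ E ∧ ‖v‖ = 1}

/-- `d_H(E, E')`: the Hausdorff distance between the unit spheres of `E` and `E'`. -/
def dH [NormedAddCommGroup B] [NormedSpace ℝ B] (E E' : Submodule ℝ B) : ℝ :=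
  Metric.hausdorffDist (subSphere E) (subSphere E')

/-- The supremum of `‖π x‖` over `x ∈ S`, where `π` is the projection onto `E` along `F`. -/
def projNormOn [NormedAddCommGroup B] [NormedSpace ℝ B] (E F : Submodule ℝ B)
    (h : IsCompl E F) (S : Set B) : ℝ :=
  sSup ((fun x => ‖(E.linearProjOfIsCompl F h x : B)‖) '' S)

/-- `|π_{E⊕F}|`: the operator norm of the projection onto `E` along `F`. -/
def projNorm [NormedAddCommGroup B] [NormedSpace ℝ B] (E F : Submodule ℝ B)
    (h : IsCompl E F) : ℝ :=
  projNormOn E F h (Metric.closedBall 0 1)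

/-- `α(E, F) = inf { ‖e - f‖ : e ∈ E, ‖e‖ = 1, f ∈ F }`. -/
def alphaAngle [NormedAddCommGroup B] [NormedSpace ℝ B] (E F : Submodule ℝ B) : ℝ :=
  sInf {r : ℝ | ∃ e ∈ E, ∃ f ∈ F, ‖e‖ = 1 ∧ r = ‖e - f‖}

/-- `ω_k`: the volume of the Euclidean unit ball in `ℝ^k`. -/
def euclideanBallVol (k : ℕ) : ENNReal :=
  volume (Metric.closedBall (0 : EuclideanSpace ℝ (Fin k)) 1)

/-- `μ` is the induced volume `m_E` on the `k`-dimensional subspace `E`: the (unique) Haar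
measure on `E` assigning mass `ω_k` to the unit ball of `E`. -/
def IsInducedVolume [NormedAddCommGroup B] [NormedSpace ℝ B] [MeasurableSpace B]
    (E : Submodule ℝ B) (k : ℕ) (μ : Measure E) : Prop :=
  Measure.IsAddHaarMeasure μ ∧ μ {v : E | ‖v‖ ≤ 1} = euclideanBallVol k

/-- `det(A|E)`, computed with respect to induced volumes `μE` on `E` and `μF` on a
subspace `F` containing `A(E)`: the ratio `μF(A(B_E)) / μE(B_E)` where `B_E` is
the unit ball of `E`. -/
def detIn [NormedAddCommGroup B] [NormedSpace ℝ B] [NormedAddCommGroup B'] [NormedSpace ℝ B']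
    [MeasurableSpace B] [MeasurableSpace B']
    (A : B →L[ℝ] B') (E : Submodule ℝ B) (F : Submodule ℝ B')
    (μE : Measure E) (μF : Measure F) : ℝ :=
  (μF {w : F | ∃ v : B, v ∈ E ∧ ‖v‖ ≤ 1 ∧ A v = (w : B')}).toReal /
    (μE {v : E | ‖v‖ ≤ 1}).toReal

/-- `P[v₁, …, v_k]`: the parallelepiped spanned by the vectors `v i`. -/
def pped [AddCommGroup B] [Module ℝ B] {k : ℕ} (v : Fin k → B) : Set B :=
  {x : B | ∃ a : Fin k → ℝ, (∀ i, a i ∈ Set.Icc (0 : ℝ) 1) ∧ x = ∑ i, a i • v i}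

/-- `N[v₁, …, v_k]`: the sum of the norms of the projections, within the span of the `v i`,
onto each `⟨v i⟩` along the span of the other basis vectors. -/
def Nquan [NormedAddCommGroup B] [NormedSpace ℝ B] {k : ℕ} (v : Fin k → B) : ℝ :=
  ∑ i, sSup {r : ℝ | ∃ a : Fin k → ℝ, ‖∑ j, a j • v j‖ ≤ 1 ∧ r = ‖a i • v i‖}

/-- The operator norm of the restriction of `A` to the subspace `E`. -/
def opNormOnSub [NormedAddCommGroup B] [NormedSpace ℝ B] [NormedAddCommGroup B']
    [NormedSpace ℝ B'] (A : B →L[ℝ] B') (E : Submodule ℝ B) : ℝ :=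
  sSup {r : ℝ | ∃ v ∈ E, ‖v‖ ≤ 1 ∧ r = ‖A v‖}

/-- The `n`-th iterate (`n ∈ ℤ`) of the invertible pair `(f, g)`, `g = f⁻¹`. -/
def zIter {X : Type*} (f g : X → X) (n : ℤ) (x : X) : X :=
  if 0 ≤ n then f^[n.toNat] x else g^[(-n).toNat] x

/-- `ψ'(x) = sup_{n ∈ ℤ} e^{-|n| δ} ψ(f^n x)`. -/
def psiSup {X : Type*} (f g : X → X) (ψ : X → ℝ) (δ : ℝ) (x : X) : ℝ :=
  sSup (Set.range fun n : ℤ => Real.exp (-|(n : ℝ)| * δ) * ψ (zIter f g n x))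

/-- The cocycle `T^n_x = T_{f^{n-1} x} ∘ ⋯ ∘ T_x`. -/
def cocycle {X : Type*} [NormedAddCommGroup B] [NormedSpace ℝ B]
    (f : X → X) (T : X → B →L[ℝ] B) : ℕ → X → B →L[ℝ] B
  | 0, _ => ContinuousLinearMap.id ℝ B
  | n + 1, x => (cocycle f T n (f x)).comp (T x)

end BY

end
set_option maxHeartbeats 1000000

open Matrix

lemma dot_symm {k : ℕ} {M : Matrix (Fin k) (Fin k) ℝ} (hs : M.IsSymm)
    (x y : Fin k → ℝ) : x ⬝ᵥ M *ᵥ y = y ⬝ᵥ M *ᵥ x := by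
  rw [dotProduct_mulVec, ← mulVec_transpose, hs.eq, dotProduct_comm]

lemma cs_aux {k : ℕ} {M : Matrix (Fin k) (Fin k) ℝ} (hs : M.IsSymm)
    (hpos : ∀ w, 0 ≤ w ⬝ᵥ M *ᵥ w) (x y : Fin k → ℝ) :
    (x ⬝ᵥ M *ᵥ y) ^ 2 ≤ (x ⬝ᵥ M *ᵥ x) * (y ⬝ᵥ M *ᵥ y) := by
  have key : ∀ t : ℝ, 0 ≤ (y ⬝ᵥ M *ᵥ y) * (t * t) + (2 * (x ⬝ᵥ M *ᵥ y)) * t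
      + (x ⬝ᵥ M *ᵥ x) := by
    intro t
    have h := hpos (x + t • y)
    simp only [mulVec_add, mulVec_smul, add_dotProduct, dotProduct_add, smul_dotProduct,
      dotProduct_smul, smul_eq_mul] at h
    rw [dot_symm hs y x] at h
    nlinarith [h]
  have h2 := discrim_le_zero key
  rw [discrim] at h2
  nlinarith [h2]

lemma single_dot {k : ℕ} (M : Matrix (Fin k) (Fin k) ℝ) (a b : Fin k) :
    (Pi.single a 1 : Fin k → ℝ) ⬝ᵥ M *ᵥ (Pi.single b 1) = M a b := by
  simp [dotProduct, mulVec, Pi.single_apply]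

lemma vecMulVec_mulVec' {k : ℕ} (f v : Fin k → ℝ) :
    (vecMulVec f f) *ᵥ v = (f ⬝ᵥ v) • f := by
  ext i
  simp only [mulVec, vecMulVec_apply, dotProduct, Pi.smul_apply, smul_eq_mul]
  rw [Finset.sum_mul]
  exact Finset.sum_congr rfl fun j _ => by ring

lemma john_key {k : ℕ} (hk : k ≠ 0) (N : (Fin k → ℝ) → ℝ)
    (hN0 : ∀ w, 0 ≤ N w)
    (htri : ∀ w₁ w₂, N (w₁ + w₂) ≤ N w₁ + N w₂)
    (hneg : ∀ w, N (-w) = N w)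
    (hlow : ∃ c : ℝ, 0 < c ∧ ∀ w, c * (w ⬝ᵥ w) ≤ N w ^ 2)
    (hdual : ∀ w, N w ≠ 0 → ∃ φ : (Fin k → ℝ) →ₗ[ℝ] ℝ, φ w = N w ∧ ∀ v, |φ v| ≤ N v) :
    ∃ M : Matrix (Fin k) (Fin k) ℝ, M.IsSymm ∧
      (∀ w, w ≠ 0 → 0 < w ⬝ᵥ M *ᵥ w) ∧ (∀ w, w ⬝ᵥ M *ᵥ w ≤ N w ^ 2) ∧
      (∀ w, N w ^ 2 ≤ k * (w ⬝ᵥ M *ᵥ w)) := by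
  classical
  obtain ⟨c, hc, hcle⟩ := hlow
  set T : Set (Matrix (Fin k) (Fin k) ℝ) :=
    {M | M.IsSymm ∧ ∀ w, 0 ≤ w ⬝ᵥ M *ᵥ w ∧ w ⬝ᵥ M *ᵥ w ≤ N w ^ 2} with hT
  have hdotself : ∀ w : Fin k → ℝ, 0 ≤ w ⬝ᵥ w := fun w =>
    Finset.sum_nonneg fun i _ => mul_self_nonneg _
  -- c • 1 ∈ T
  have hsmul1 : ∀ w : Fin k → ℝ,
      w ⬝ᵥ (c • (1 : Matrix (Fin k) (Fin k) ℝ)) *ᵥ w = c * (w ⬝ᵥ w) := by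
    intro w
    rw [smul_mulVec, one_mulVec, dotProduct_smul, smul_eq_mul]
  have hcT : c • (1 : Matrix (Fin k) (Fin k) ℝ) ∈ T := by
    refine ⟨?_, fun w => ?_⟩
    · show _ = _
      rw [transpose_smul, transpose_one]
    · rw [hsmul1 w]
      exact ⟨mul_nonneg hc.le (hdotself w), hcle w⟩
  -- T is closed
  have h2 : ∀ w : Fin k → ℝ, Continuous fun M : Matrix (Fin k) (Fin k) ℝ => w ⬝ᵥ M *ᵥ w :=
    fun w => (continuous_const : Continuous fun _ : Matrix (Fin k) (Fin k) ℝ => w).dotProduct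
      (continuous_id.matrix_mulVec continuous_const)
  have hclosed : IsClosed T := by
    have : T = {M : Matrix (Fin k) (Fin k) ℝ | M.IsSymm} ∩
        ⋂ w : Fin k → ℝ, ({M | 0 ≤ w ⬝ᵥ M *ᵥ w} ∩ {M | w ⬝ᵥ M *ᵥ w ≤ N w ^ 2}) := by
      ext M
      simp only [hT, Set.mem_setOf_eq, Set.mem_inter_iff, Set.mem_iInter]
    rw [this]
    refine IsClosed.inter (isClosed_eq continuous_id.matrix_transpose continuous_id) ?_
    exact isClosed_iInter fun w => (isClosed_le continuous_const (h2 w)).inter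
      (isClosed_le (h2 w) continuous_const)
  -- T is bounded
  set S := ∑ i : Fin k, N (Pi.single i 1) with hS
  have hSi : ∀ i : Fin k, N (Pi.single i 1) ≤ S :=
    fun i => Finset.single_le_sum (f := fun j => N (Pi.single j 1)) (fun j _ => hN0 _)
      (Finset.mem_univ i)
  have hbound : ∀ M ∈ T, ∀ i j, M i j ∈ Set.Icc (-(2 * S ^ 2)) (2 * S ^ 2) := by
    intro M hM i j
    obtain ⟨hsymm, hb⟩ := hM
    have hsym' : M j i = M i j := by
      have := congrFun (congrFun hsymm.eq i) j
      simpa using this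
    have hplus := (hb (Pi.single i 1 + Pi.single j 1)).1
    have hminus := (hb (Pi.single i 1 - Pi.single j 1)).1
    have e1 : (Pi.single i 1 + Pi.single j 1) ⬝ᵥ M *ᵥ (Pi.single i 1 + Pi.single j 1)
        = M i i + M i j + M j i + M j j := by
      simp only [mulVec_add, add_dotProduct, dotProduct_add, single_dot]
      ring
    have e2 : (Pi.single i 1 - Pi.single j 1) ⬝ᵥ M *ᵥ (Pi.single i 1 - Pi.single j 1)
        = M i i - M i j - M j i + M j j := by
      simp only [mulVec_sub, sub_dotProduct, dotProduct_sub, single_dot]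
      ring
    have hp2 : (Pi.single i 1 + Pi.single j 1) ⬝ᵥ M *ᵥ (Pi.single i 1 + Pi.single j 1)
        ≤ (2*S)^2 := by
      refine le_trans (hb _).2 ?_
      have h0 := hN0 (Pi.single i 1 + Pi.single j 1)
      have := htri (Pi.single i 1) (Pi.single j 1)
      have hi := hSi i; have hj := hSi j
      nlinarith
    have hm2 : (Pi.single i 1 - Pi.single j 1) ⬝ᵥ M *ᵥ (Pi.single i 1 - Pi.single j 1)
        ≤ (2*S)^2 := by
      refine le_trans (hb _).2 ?_
      have h0 := hN0 (Pi.single i 1 - Pi.single j 1)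
      have h1 := htri (Pi.single i 1) (-Pi.single j 1)
      rw [hneg] at h1
      rw [sub_eq_add_neg]
      have hi := hSi i; have hj := hSi j
      have h1' : N (Pi.single i 1 + -Pi.single j 1) ≤ 2 * S := by linarith
      rw [← sub_eq_add_neg] at h1' ⊢
      have h0' := hN0 (Pi.single i 1 - Pi.single j 1)
      nlinarith
    rw [e1] at hp2 hplus
    rw [e2] at hm2 hminus
    constructor <;> nlinarith [hsym']
  -- compactness
  have hKcompact : IsCompact (Set.univ.pi fun _ : Fin k =>
      Set.univ.pi fun _ : Fin k => Set.Icc (-(2 * S ^ 2)) (2 * S ^ 2)) :=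
    isCompact_univ_pi fun _ => isCompact_univ_pi fun _ => isCompact_Icc
  have hTcompact : IsCompact T := by
    refine hKcompact.of_isClosed_subset hclosed ?_
    intro M hM
    exact fun i _ => fun j _ => hbound M hM i j
  -- maximizer
  obtain ⟨M₀, hM₀T, hmax⟩ := hTcompact.exists_isMaxOn ⟨_, hcT⟩
    (continuous_id.matrix_det.continuousOn)
  obtain ⟨hsymm₀, hb₀⟩ := hM₀T
  have hQ0 : ∀ w, 0 ≤ w ⬝ᵥ M₀ *ᵥ w := fun w => (hb₀ w).1
  have hQle : ∀ w, w ⬝ᵥ M₀ *ᵥ w ≤ N w ^ 2 := fun w => (hb₀ w).2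
  have hdet0 : (0:ℝ) < M₀.det := by
    have h1 : (c • (1 : Matrix (Fin k) (Fin k) ℝ)).det ≤ M₀.det := hmax hcT
    have h2 : (c • (1 : Matrix (Fin k) (Fin k) ℝ)).det = c ^ k := by
      rw [det_smul, det_one, mul_one]
      simp
    rw [h2] at h1
    exact lt_of_lt_of_le (pow_pos hc k) h1
  -- positive definiteness
  have hposdef : ∀ w, w ≠ 0 → 0 < w ⬝ᵥ M₀ *ᵥ w := by
    intro w hw
    rcases lt_or_eq_of_le (hQ0 w) with h | h
    · exact h
    exfalso
    have hzero : ∀ x, x ⬝ᵥ M₀ *ᵥ w = 0 := by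
      intro x
      have := cs_aux hsymm₀ hQ0 x w
      rw [← h] at this
      nlinarith [sq_nonneg (x ⬝ᵥ M₀ *ᵥ w)]
    have hMw : M₀ *ᵥ w = 0 := by
      have := hzero (M₀ *ᵥ w)
      rwa [dotProduct_self_eq_zero] at this
    have : M₀.det = 0 := Matrix.exists_mulVec_eq_zero_iff.mp ⟨w, hw, hMw⟩
    exact hdet0.ne' this
  refine ⟨M₀, hsymm₀, hposdef, hQle, ?_⟩
  -- the main claim
  by_contra hcon
  push_neg at hcon
  obtain ⟨w₀, hw₀⟩ := hcon
  obtain ⟨m, rfl⟩ : ∃ m, k = m + 1 := Nat.exists_eq_succ_of_ne_zero hk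
  have hNw₀ : 0 < N w₀ := by
    rcases lt_or_eq_of_le (hN0 w₀) with h | h
    · exact h
    exfalso
    have := mul_nonneg (Nat.cast_nonneg (α := ℝ) (m+1)) (hQ0 w₀)
    rw [← h] at hw₀
    nlinarith
  obtain ⟨φ, hφw₀, hφle⟩ := hdual w₀ hNw₀.ne'
  set f : Fin (m+1) → ℝ := fun i => φ (Pi.single i 1) with hf
  have hfdot : ∀ v, f ⬝ᵥ v = φ v := by
    intro v
    have hv : v = ∑ i, Pi.single i (v i) := (Finset.univ_sum_single v).symm
    rw [dotProduct]
    conv_rhs => rw [hv]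
    rw [map_sum]
    refine Finset.sum_congr rfl fun i _ => ?_
    have : Pi.single i (v i) = v i • (Pi.single i 1 : Fin (m+1) → ℝ) := by
      rw [← Pi.single_smul, smul_eq_mul, mul_one]
    rw [this, _root_.map_smul, smul_eq_mul, mul_comm]
  have hdetne : IsUnit M₀.det := isUnit_iff_ne_zero.mpr hdet0.ne'
  set g' : Fin (m+1) → ℝ := M₀⁻¹ *ᵥ f with hg'
  have hfg : M₀ *ᵥ g' = f := by
    rw [hg', mulVec_mulVec, mul_nonsing_inv _ hdetne, one_mulVec]
  set e2 : ℝ := f ⬝ᵥ g' with he2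
  have he2Q : e2 = g' ⬝ᵥ M₀ *ᵥ g' := by
    rw [he2, ← hfg, dotProduct_comm]
  have hCS : ∀ v, (f ⬝ᵥ v) ^ 2 ≤ e2 * (v ⬝ᵥ M₀ *ᵥ v) := by
    intro v
    have h := cs_aux hsymm₀ hQ0 g' v
    have hgv : g' ⬝ᵥ M₀ *ᵥ v = f ⬝ᵥ v := by
      rw [dot_symm hsymm₀ g' v, hfg, dotProduct_comm v f]
    rw [hgv, ← he2Q] at h
    exact h
  have hQw₀ : 0 < w₀ ⬝ᵥ M₀ *ᵥ w₀ := by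
    rcases lt_or_eq_of_le (hQ0 w₀) with h | h
    · exact h
    · exfalso
      have h1 := hCS w₀
      rw [hfdot, hφw₀, ← h] at h1
      nlinarith
  have he2k : ((m:ℝ) + 1) < e2 := by
    have h1 := hCS w₀
    rw [hfdot, hφw₀] at h1
    have h2 := hw₀
    push_cast at h2
    nlinarith [hQw₀]
  have hm1 : (0:ℝ) < (m:ℝ) + 1 := by positivity
  have he21 : (0:ℝ) < e2 - 1 := by
    have : (1:ℝ) ≤ (m:ℝ) + 1 := by
      have := Nat.cast_nonneg (α := ℝ) m
      linarith
    linarith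
  set β : ℝ := min ((e2 - ((m:ℝ)+1)) / ((e2 - 1) * ((m:ℝ)+1))) (1/2) with hβ
  have hβpos : 0 < β := by
    apply lt_min
    · apply div_pos (by linarith) (by positivity)
    · norm_num
  have hβhalf : β ≤ 1/2 := min_le_right _ _
  have h1β : 0 < 1 - β := by linarith
  have hβk : β * ((e2 - 1) * ((m:ℝ)+1)) ≤ e2 - ((m:ℝ)+1) := by
    have h := min_le_left ((e2 - ((m:ℝ)+1)) / ((e2 - 1) * ((m:ℝ)+1))) (1/2)
    rw [← hβ] at h
    exact (le_div_iff₀ (by positivity)).mp h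
  set M₁ := (1 - β) • M₀ + β • vecMulVec f f with hM₁
  have hQ₁ : ∀ v, v ⬝ᵥ M₁ *ᵥ v = (1-β) * (v ⬝ᵥ M₀ *ᵥ v) + β * (f ⬝ᵥ v)^2 := by
    intro v
    rw [hM₁, add_mulVec, dotProduct_add, smul_mulVec, smul_mulVec,
      dotProduct_smul, dotProduct_smul, smul_eq_mul, smul_eq_mul, vecMulVec_mulVec',
      dotProduct_smul, smul_eq_mul, dotProduct_comm v f]
    ring
  have hM₁T : M₁ ∈ T := by
    refine ⟨?_, fun w => ?_⟩
    · show M₁ᵀ = M₁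
      rw [hM₁, transpose_add, transpose_smul, transpose_smul, hsymm₀.eq]
      have : (vecMulVec f f)ᵀ = vecMulVec f f := by
        ext i j
        simp [vecMulVec_apply, transpose_apply, mul_comm]
      rw [this]
    · rw [hQ₁ w]
      refine ⟨?_, ?_⟩
      · have := hQ0 w
        nlinarith [sq_nonneg (f ⬝ᵥ w)]
      · have h1 := hQle w
        have h2 : (f ⬝ᵥ w)^2 ≤ N w ^ 2 := by
          rw [hfdot]
          exact sq_le_sq' (abs_le.mp (hφle w)).1 (abs_le.mp (hφle w)).2
        nlinarith
  have hcol : M₀ * Matrix.replicateCol Unit g' = Matrix.replicateCol Unit (M₀ *ᵥ g') := by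
    ext i j
    simp [Matrix.mul_apply, Matrix.replicateCol_apply, Matrix.mulVec, dotProduct]
  have hfactor : M₁ = M₀ * ((1 - β) • 1 + β • vecMulVec g' f) := by
    rw [Matrix.mul_add, Matrix.mul_smul, Matrix.mul_smul, Matrix.mul_one]
    rw [hM₁]
    congr 1
    rw [vecMulVec_eq Unit, vecMulVec_eq Unit, ← Matrix.mul_assoc, hcol, hfg]
  have hdet2 : ((1 - β) • (1 : Matrix (Fin (m+1)) (Fin (m+1)) ℝ) + β • vecMulVec g' f).det
      = (1-β)^(m+1) * (1 + (β/(1-β)) * e2) := by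
    have e : (1 - β) • (1 : Matrix (Fin (m+1)) (Fin (m+1)) ℝ) + β • vecMulVec g' f
        = (1 - β) • (1 + (β/(1-β)) • vecMulVec g' f) := by
      rw [smul_add, smul_smul]
      have : (1 - β) * (β/(1-β)) = β := by field_simp
      rw [this]
    rw [e, det_smul]
    have e3 : (β/(1-β)) • vecMulVec g' f = vecMulVec ((β/(1-β)) • g') f := by
      ext i j
      simp [vecMulVec_apply, smul_eq_mul]
      ring
    rw [e3, vecMulVec_eq Unit, det_one_add_replicateCol_mul_replicateRow, dotProduct_smul, he2,
      Fintype.card_fin, smul_eq_mul]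
  have hdetM₁ : M₁.det = M₀.det * ((1-β)^(m+1) * (1 + (β/(1-β)) * e2)) := by
    rw [hfactor, det_mul, hdet2]
  have hfactor2 : (1-β)^(m+1) * (1 + (β/(1-β)) * e2) = (1-β)^m * (1 + β*(e2-1)) := by
    rw [pow_succ]
    field_simp
    ring
  have hbern : 1 - (m:ℝ)*β ≤ (1-β)^m := by
    have h := one_add_mul_le_pow (a := -β) (by linarith) m
    have h2 : (1 + -β) = 1 - β := by ring
    rw [h2] at h
    linarith
  have hgt : 1 < (1-β)^m * (1 + β*(e2-1)) := by
    have hmβ : (m:ℝ) * (e2 - 1) * β < e2 - ((m:ℝ)+1) := by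
      nlinarith [mul_pos he21 hβpos]
    have h3 : (0:ℝ) < 1 + β*(e2-1) := by nlinarith
    have h4 : 1 < (1 - (m:ℝ)*β) * (1 + β*(e2-1)) := by
      nlinarith [mul_lt_mul_of_pos_left hmβ hβpos]
    have h5 : (1 - (m:ℝ)*β) * (1 + β*(e2-1)) ≤ (1-β)^m * (1 + β*(e2-1)) :=
      mul_le_mul_of_nonneg_right hbern h3.le
    linarith
  have hlt : M₀.det < M₁.det := by
    rw [hdetM₁, hfactor2]
    nlinarith [hdet0, hgt]
  exact absurd (hmax hM₁T) (not_le.mpr hlt)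

/-- John's theorem, Theorem 2.5 of the paper. Let `E` be a subspace of a
Banach space `B` of finite dimension `k`. Then there is an inner product `(·,·)` on `E`,
with associated norm `‖·‖ = √(ip v v)`, such that `‖v‖ ≤ |v| ≤ √k ‖v‖` for all `v ∈ E`. -/
theorem statement3 {B : Type*} [NormedAddCommGroup B] [NormedSpace ℝ B] [CompleteSpace B]
    (E : Submodule ℝ B) [FiniteDimensional ℝ E] (k : ℕ)
    (hdim : Module.finrank ℝ E = k) :
    ∃ ip : E → E → ℝ,
      (∀ u v w : E, ip (u + v) w = ip u w + ip v w) ∧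
      (∀ (c : ℝ) (u v : E), ip (c • u) v = c * ip u v) ∧
      (∀ u v : E, ip u v = ip v u) ∧
      (∀ v : E, v ≠ 0 → 0 < ip v v) ∧
      (∀ v : E, Real.sqrt (ip v v) ≤ ‖v‖ ∧ ‖v‖ ≤ Real.sqrt k * Real.sqrt (ip v v)) := by
  rcases Nat.eq_zero_or_pos k with rfl | hk
  · have hsub : Subsingleton E := by
      rw [← Module.finrank_zero_iff (R := ℝ)]
      exact hdim
    refine ⟨fun _ _ => 0, by simp, by simp, by simp, ?_, ?_⟩
    · intro v hv
      exact absurd (Subsingleton.elim v 0) hv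
    · intro v
      have hv : v = (0 : E) := Subsingleton.elim v 0
      subst hv
      simp
  · have hk0 : k ≠ 0 := hk.ne'
    set b : Basis (Fin k) ℝ E := Module.finBasisOfFinrankEq ℝ E hdim with hb
    set L := b.equivFun with hL
    set N : (Fin k → ℝ) → ℝ := fun w => ‖L.symm w‖ with hN
    have hN0 : ∀ w, 0 ≤ N w := fun w => norm_nonneg _
    have htri : ∀ w₁ w₂, N (w₁ + w₂) ≤ N w₁ + N w₂ := by
      intro w₁ w₂
      simp only [hN, map_add]
      exact norm_add_le _ _
    have hneg : ∀ w, N (-w) = N w := by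
      intro w
      simp only [hN, map_neg, norm_neg]
    have hlow : ∃ c : ℝ, 0 < c ∧ ∀ w, c * (w ⬝ᵥ w) ≤ N w ^ 2 := by
      set Lc : E →L[ℝ] (Fin k → ℝ) :=
        LinearMap.toContinuousLinearMap (L : E →ₗ[ℝ] (Fin k → ℝ)) with hLc
      set C := ‖Lc‖ + 1 with hC
      have hCpos : (0:ℝ) < C := by positivity
      have hw : ∀ w : Fin k → ℝ, ‖w‖ ≤ C * N w := by
        intro w
        have h1 : Lc (L.symm w) = w := by
          simp [hLc]
        calc ‖w‖ = ‖Lc (L.symm w)‖ := by rw [h1]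
          _ ≤ ‖Lc‖ * ‖L.symm w‖ := Lc.le_opNorm _
          _ ≤ C * N w := by
              have h2 := norm_nonneg (L.symm w)
              have h3 : N w = ‖L.symm w‖ := rfl
              nlinarith
      refine ⟨1 / ((k : ℝ) * C^2), by positivity, ?_⟩
      intro w
      have h1 : w ⬝ᵥ w ≤ k * ‖w‖^2 := by
        rw [dotProduct]
        calc ∑ i, w i * w i ≤ ∑ _i : Fin k, ‖w‖^2 := by
              refine Finset.sum_le_sum fun i _ => ?_
              have h := norm_le_pi_norm w i
              rw [Real.norm_eq_abs] at h
              nlinarith [abs_nonneg (w i), le_abs_self (w i), neg_abs_le (w i)]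
          _ = k * ‖w‖^2 := by simp [Finset.sum_const, Finset.card_univ]
      have h2 := hw w
      have hk1 : (1:ℝ) ≤ k := by exact_mod_cast hk
      rw [div_mul_eq_mul_div, one_mul, div_le_iff₀ (by positivity)]
      have h3 : ‖w‖^2 ≤ C^2 * N w^2 := by nlinarith [norm_nonneg w, hN0 w]
      nlinarith [hN0 w]
    have hdual : ∀ w, N w ≠ 0 → ∃ φ : (Fin k → ℝ) →ₗ[ℝ] ℝ, φ w = N w ∧ ∀ v, |φ v| ≤ N v := by
      intro w hw
      have hv : L.symm w ≠ 0 := by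
        intro h
        apply hw
        rw [hN]
        simp only [h, norm_zero]
      obtain ⟨g, hg1, hgx⟩ := exists_dual_vector ℝ (L.symm w) (norm_ne_zero_iff.mpr hv)
      refine ⟨(g : E →ₗ[ℝ] ℝ).comp (L.symm : (Fin k → ℝ) →ₗ[ℝ] E), ?_, ?_⟩
      · simpa [hN] using hgx
      · intro v
        simp only [LinearMap.comp_apply, LinearEquiv.coe_coe, ContinuousLinearMap.coe_coe]
        rw [← Real.norm_eq_abs]
        calc ‖g (L.symm v)‖ ≤ ‖g‖ * ‖L.symm v‖ := g.le_opNorm _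
          _ = N v := by rw [hg1, one_mul]
    obtain ⟨M₀, hsymm, hpos, hle, hge⟩ := john_key hk0 N hN0 htri hneg hlow hdual
    have hNL : ∀ v : E, N (L v) = ‖v‖ := by
      intro v
      rw [hN]
      simp only [LinearEquiv.symm_apply_apply]
    refine ⟨fun u v => (L u) ⬝ᵥ M₀ *ᵥ (L v), ?_, ?_, ?_, ?_, ?_⟩
    · intro u v w
      show (L (u + v)) ⬝ᵥ M₀ *ᵥ (L w) = _
      rw [map_add, add_dotProduct]
    · intro cc u v
      show (L (cc • u)) ⬝ᵥ M₀ *ᵥ (L v) = _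
      rw [_root_.map_smul, smul_dotProduct, smul_eq_mul]
    · intro u v
      exact dot_symm hsymm (L u) (L v)
    · intro v hv
      refine hpos (L v) fun h => hv ?_
      have := L.map_eq_zero_iff.mp h
      exact this
    · intro v
      constructor
      · have h := hle (L v)
        rw [hNL] at h
        calc Real.sqrt ((L v) ⬝ᵥ M₀ *ᵥ (L v)) ≤ Real.sqrt (‖v‖^2) := Real.sqrt_le_sqrt h
          _ = ‖v‖ := Real.sqrt_sq (norm_nonneg v)
      · have h := hge (L v)
        rw [hNL] at h
        calc ‖v‖ = Real.sqrt (‖v‖^2) := (Real.sqrt_sq (norm_nonneg v)).symm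
          _ ≤ Real.sqrt (k * ((L v) ⬝ᵥ M₀ *ᵥ (L v))) := Real.sqrt_le_sqrt h
          _ = Real.sqrt k * Real.sqrt ((L v) ⬝ᵥ M₀ *ᵥ (L v)) :=
              Real.sqrt_mul (by positivity) _
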